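/- Let 1 ≤ p < q ≤ n and let r_q be an integer with 0 < r_q < q. Then the following exchange laws hold in W: (i) if q − r_q ≥ p then τ_q^{r_q}·τ_p^{−p} = τ_{r_q}^{−r_q}·τ_{p+r_q}^{−p−r_q}·τ_q^{r_q}; (ii) if q − r_q < p then τ_q^{r_q}·τ_p^{−p} = τ_{p+r_q−q}^{−p−r_q+q}·τ_{r_q}^{−r_q}·τ_q^{r_q−q}. -/
import Mathlib


/-- The Coxeter matrix of type `Bₙ`, with the bond of order `4` between the
generators of indices `0` and `1` (the paper's convention): `s_i² = 1`,
`(s_0·s_1)⁴ = 1`, `(s_i·s_{i+1})³ = 1` for `1 ≤ i ≤ n-2`, and `(s_i·s_j)² = 1`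
for `|i-j| ≥ 2`. -/
def BCoxeterMatrix (n : ℕ) : CoxeterMatrix (Fin n) where
  M := Matrix.of fun i j : Fin n ↦
    if i = j then 1
      else if ((i : ℕ) = 0 ∧ (j : ℕ) = 1) ∨ ((j : ℕ) = 0 ∧ (i : ℕ) = 1) then 4
      else if (j : ℕ) + 1 = i ∨ (i : ℕ) + 1 = j then 3 else 2
  isSymm := by unfold Matrix.IsSymm; aesop
  diagonal := by simp
  off_diagonal := by aesop

variable {n : ℕ} {W : Type*} [Group W]

/-- The simple reflection `s_j` of the Coxeter system, for `0 ≤ j ≤ n-1`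
(junk value `1` for `j ≥ n`). -/
def sgen (cs : CoxeterSystem (BCoxeterMatrix n) W) (j : ℕ) : W :=
  if h : j < n then cs.simple ⟨j, h⟩ else 1

/-- `tau cs k` is the element `τ_k = s_0 · s_1 ⋯ s_{k-1}` (with `τ_0 = 1`). -/
def tau (cs : CoxeterSystem (BCoxeterMatrix n) W) (k : ℕ) : W :=
  ((List.range k).map (sgen cs)).prod

namespace ExchAux

variable (cs : CoxeterSystem (BCoxeterMatrix n) W)

local notation "s" => sgen cs

lemma sq (j : ℕ) : s j * s j = 1 := by
  unfold sgen; split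
  · exact cs.simple_mul_simple_self _
  · simp

lemma sq' (j : ℕ) (x : W) : s j * (s j * x) = x := by
  rw [← mul_assoc, sq, one_mul]

lemma Mval {i j : ℕ} (hi : i < n) (hj : j < n) (h : i + 2 ≤ j) :
    (BCoxeterMatrix n).M ⟨i, hi⟩ ⟨j, hj⟩ = 2 := by
  simp only [BCoxeterMatrix, Matrix.of_apply]
  rw [if_neg (by simp only [Fin.mk.injEq]; omega),
     if_neg (by omega),
     if_neg (by omega)]

lemma Mval3 {i j : ℕ} (hi : i < n) (hj : j < n) (h1 : 1 ≤ i) (h : j = i + 1) :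
    (BCoxeterMatrix n).M ⟨i, hi⟩ ⟨j, hj⟩ = 3 := by
  simp only [BCoxeterMatrix, Matrix.of_apply]
  rw [if_neg (by simp only [Fin.mk.injEq]; omega),
     if_neg (by omega),
     if_pos (by omega)]

lemma Mval4 {i j : ℕ} (hi : i < n) (hj : j < n) (h0 : i = 0) (h : j = 1) :
    (BCoxeterMatrix n).M ⟨i, hi⟩ ⟨j, hj⟩ = 4 := by
  simp only [BCoxeterMatrix, Matrix.of_apply]
  rw [if_neg (by simp only [Fin.mk.injEq]; omega),
     if_pos (by omega)]

lemma comm {i j : ℕ} (h : i + 2 ≤ j) : s i * s j = s j * s i := by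
  unfold sgen
  split
  case isFalse => simp
  case isTrue hi =>
  split
  case isFalse => simp
  case isTrue hj =>
  have h2 := cs.simple_mul_simple_pow ⟨i, hi⟩ ⟨j, hj⟩
  rw [Mval hi hj h] at h2
  have : (cs.simple ⟨i, hi⟩ * cs.simple ⟨j, hj⟩) = (cs.simple ⟨i, hi⟩ * cs.simple ⟨j, hj⟩)⁻¹ := by
    rw [inv_eq_of_mul_eq_one_right]; rw [← pow_two]; exact h2
  rw [this, mul_inv_rev, cs.inv_simple, cs.inv_simple]

lemma braid {i : ℕ} (h1 : 1 ≤ i) (h2 : i + 1 < n) :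
    s i * s (i+1) * s i = s (i+1) * s i * s (i+1) := by
  have hi : i < n := by omega
  have key := cs.simple_mul_simple_pow ⟨i, hi⟩ ⟨i+1, h2⟩
  rw [Mval3 hi h2 h1 rfl] at key
  unfold sgen
  rw [dif_pos hi, dif_pos h2]
  set a := cs.simple ⟨i, hi⟩
  set b := cs.simple ⟨i+1, h2⟩
  have ha : a * a = 1 := cs.simple_mul_simple_self _
  have hb : b * b = 1 := cs.simple_mul_simple_self _
  -- (ab)^3 = 1
  have : a * b * a * (b * a * b) = 1 := by
    have := key
    rw [pow_succ, pow_succ, pow_one] at this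
    group at this ⊢
    convert this using 1
  calc a * b * a = a * b * a * (b * a * b) * (b * a * b)⁻¹ := by group
    _ = (b * a * b)⁻¹ := by rw [this, one_mul]
    _ = b⁻¹ * a⁻¹ * b⁻¹ := by group
    _ = b * a * b := by
        rw [inv_eq_of_mul_eq_one_right ha, inv_eq_of_mul_eq_one_right hb]

lemma B4 : s 0 * s 1 * s 0 * s 1 = s 1 * s 0 * s 1 * s 0 := by
  by_cases h2 : 1 < n
  · have h0 : (0:ℕ) < n := by omega
    have key := cs.simple_mul_simple_pow ⟨0, h0⟩ ⟨1, h2⟩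
    rw [Mval4 h0 h2 rfl rfl] at key
    unfold sgen
    rw [dif_pos h0, dif_pos h2]
    set a := cs.simple ⟨0, h0⟩
    set b := cs.simple ⟨1, h2⟩
    have ha : a * a = 1 := cs.simple_mul_simple_self _
    have hb : b * b = 1 := cs.simple_mul_simple_self _
    have h8 : a * b * a * b * (a * b * a * b) = 1 := by
      have h := key
      rw [show (4:ℕ) = 2*2 from rfl, pow_mul, pow_two, pow_two] at h
      simpa only [mul_assoc] using h
    calc a * b * a * b = (a * b * a * b)⁻¹ := (inv_eq_of_mul_eq_one_right h8).symm
      _ = b⁻¹ * a⁻¹ * b⁻¹ * a⁻¹ := by group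
      _ = b * a * b * a := by
          rw [inv_eq_of_mul_eq_one_right ha, inv_eq_of_mul_eq_one_right hb]
  · -- n ≤ 1 : s 1 = 1
    have h1 : ¬ (1 < n) := h2
    unfold sgen
    rw [dif_neg h1]
    simp


lemma comm_both {i j : ℕ} (h : i + 2 ≤ j ∨ j + 2 ≤ i) : s i * s j = s j * s i := by
  rcases h with h | h
  · exact comm cs h
  · exact (comm cs h).symm

lemma commL {x y : W} (h : x * y = y * x) (z : W) : x * (y * z) = y * (x * z) := by
  rw [← mul_assoc, h, mul_assoc]

def run (a : ℕ) : ℕ → W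
  | 0 => 1
  | (l+1) => run a l * sgen cs (a + l)

lemma run_succ (a l : ℕ) : run cs a (l+1) = run cs a l * s (a + l) := rfl

lemma run_cons (a l : ℕ) : run cs a (l+1) = s a * run cs (a+1) l := by
  induction l with
  | zero => simp [run]
  | succ l ih =>
    rw [run_succ, ih, run_succ, mul_assoc]
    have e : a + (l+1) = a + 1 + l := by omega
    rw [e]

lemma run_append (a l1 l2 : ℕ) : run cs a (l1 + l2) = run cs a l1 * run cs (a + l1) l2 := by
  induction l2 with
  | zero => simp [run]
  | succ l ih =>
    have : l1 + (l + 1) = (l1 + l) + 1 := by omega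
    rw [this, run_succ, ih, run_succ, mul_assoc]
    have e : a + (l1 + l) = a + l1 + l := by omega
    rw [e]

lemma tau_run (k : ℕ) : tau cs k = run cs 0 k := by
  induction k with
  | zero => rfl
  | succ k ih =>
    rw [run_succ, ← ih]
    unfold tau
    rw [List.range_succ, List.map_append, List.prod_append]
    simp

lemma comm_run {k a l : ℕ} (h : k + 2 ≤ a ∨ a + l + 1 ≤ k) :
    s k * run cs a l = run cs a l * s k := by
  induction l with
  | zero => simp [run]
  | succ l ih =>
    rw [run_succ, ← mul_assoc, ih (by omega), mul_assoc, mul_assoc]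
    rw [comm_both cs (by omega)]

lemma sigma_shift {m k : ℕ} (hm : m + 1 ≤ n) (hk : k + 2 ≤ m) :
    run cs 1 m * s (k+1) = s (k+2) * run cs 1 m := by
  have hsplit : run cs 1 m = run cs 1 (k+2) * run cs (k+3) (m - (k+2)) := by
    have h1 : m = (k+2) + (m - (k+2)) := by omega
    have h2 : (1:ℕ) + (k+2) = k + 3 := by omega
    conv_lhs => rw [h1]
    rw [run_append, h2]
  have hcore : run cs 1 (k+2) * s (k+1) = s (k+2) * run cs 1 (k+2) := by
    have e1 : run cs 1 (k+2) = run cs 1 k * s (k+1) * s (k+2) := by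
      rw [run_succ, run_succ]
      congr 2
      · congr 1
        omega
      · omega
    rw [e1, mul_assoc, mul_assoc, mul_assoc]
    rw [show s (k+1) * (s (k+2) * s (k+1)) = s (k+1) * s (k+2) * s (k+1) from
      (mul_assoc _ _ _).symm]
    rw [braid cs (by omega) (by omega)]
    rw [show run cs 1 k * (s (k+2) * s (k+1) * s (k+2)) =
      run cs 1 k * s (k+2) * (s (k+1) * s (k+2)) from by group]
    rw [← comm_run cs (a := 1) (l := k) (by omega)]
    group
  calc run cs 1 m * s (k+1)
      = run cs 1 (k+2) * (run cs (k+3) (m - (k+2)) * s (k+1)) := by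
        rw [hsplit, mul_assoc]
    _ = run cs 1 (k+2) * (s (k+1) * run cs (k+3) (m - (k+2))) := by
        rw [← comm_run cs (by omega)]
    _ = (run cs 1 (k+2) * s (k+1)) * run cs (k+3) (m - (k+2)) := by
        rw [mul_assoc]
    _ = s (k+2) * run cs 1 m := by
        rw [hcore, hsplit, mul_assoc]


lemma star : ∀ d m', m' + d + 2 ≤ n →
    run cs 1 (m'+d+1) * run cs (m'+1) (d+1) = run cs (m'+2) d * run cs 1 (m'+d) := by
  intro d
  induction d with
  | zero =>
    intro m' h
    have e1 : run cs (m'+1) 1 = s (m'+1) := by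
      rw [run_succ]; simp [run]
    have e2 : run cs 1 (m'+0+1) = run cs 1 m' * s (m'+1) := by
      rw [run_succ]
      have : (1:ℕ) + m' = m' + 1 := by omega
      rw [this]
    rw [e1, e2, mul_assoc, sq, mul_one]
    simp [run]
  | succ d ih =>
    intro m' h
    have e1 : run cs (m'+1) (d+2) = s (m'+1) * run cs (m'+2) (d+1) := run_cons cs _ _
    have e2 : m' + (d+1) + 1 = m' + d + 2 := by omega
    rw [e2, e1, ← mul_assoc]
    rw [show run cs 1 (m'+d+2) * s (m'+1) = s (m'+2) * run cs 1 (m'+d+2) from by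
      have := sigma_shift cs (m := m'+d+2) (k := m') (by omega) (by omega)
      exact this]
    rw [mul_assoc]
    have ihh := ih (m'+1) (by omega)
    rw [show run cs 1 (m'+d+2) * run cs (m'+2) (d+1) =
        run cs (m'+3) d * run cs 1 (m'+1+d) from by
      have h2 : m' + 1 + d + 1 = m' + d + 2 := by omega
      have h3 : m' + 1 + 1 = m' + 2 := by omega
      have h4 : m' + 1 + 2 = m' + 3 := by omega
      rw [h2, h3, h4] at ihh
      exact ihh]
    rw [← mul_assoc]
    have e5 : s (m'+2) * run cs (m'+3) d = run cs (m'+2) (d+1) := (run_cons cs _ _).symm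
    rw [e5]
    have e6 : m' + 1 + d = m' + (d+1) := by omega
    rw [e6]

lemma Cpow : ∀ q, q + 1 ≤ n → (run cs 1 q)^(q+1) = 1 := by
  intro q
  induction q with
  | zero => intro h; simp [run]
  | succ q ih =>
    intro h
    have A : ∀ j e, j + e = q + 1 → (run cs 1 (q+1))^(j+1) = run cs (j+1) e * (run cs 1 q)^j := by
      intro j
      induction j with
      | zero =>
        intro e he
        rw [pow_one, pow_zero, mul_one]
        rw [show e = q + 1 from by omega]
      | succ j ihj =>
        intro e he
        have h1 := ihj (e+1) (by omega)
        rw [pow_succ', h1, ← mul_assoc]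
        have hst := star cs e j (by omega)
        rw [show run cs 1 (q+1) * run cs (j+1) (e+1) =
            run cs (j+2) e * run cs 1 q from by
          have h2 : j + e + 1 = q + 1 := by omega
          have h3 : j + e = q := by omega
          rw [h2, h3] at hst
          exact hst]
        rw [mul_assoc, ← pow_succ']

    have := A (q+1) 0 (by omega)
    rw [this, ih (by omega)]
    simp [run]

lemma sigma_pow {q : ℕ} (hq : q ≤ n) : (run cs 1 (q-1))^q = 1 := by
  cases q with
  | zero => simp
  | succ q => exact Cpow cs q hq


lemma swapL {x y u v : W} (h : x * y = u * v) (z : W) : x * (y * z) = u * (v * z) := by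
  rw [← mul_assoc, h, mul_assoc]

lemma braid' {i : ℕ} (h1 : 1 ≤ i) (h2 : i + 1 < n) (x : W) :
    s i * (s (i+1) * (s i * x)) = s (i+1) * (s i * (s (i+1) * x)) := by
  rw [← mul_assoc, ← mul_assoc, ← mul_assoc, ← mul_assoc, braid cs h1 h2]

lemma B4' (x : W) : s 0 * (s 1 * (s 0 * (s 1 * x))) = s 1 * (s 0 * (s 1 * (s 0 * x))) := by
  have h := B4 cs
  calc s 0 * (s 1 * (s 0 * (s 1 * x))) = (s 0 * s 1 * s 0 * s 1) * x := by
        simp only [mul_assoc]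
    _ = (s 1 * s 0 * s 1 * s 0) * x := by rw [h]
    _ = s 1 * (s 0 * (s 1 * (s 0 * x))) := by simp only [mul_assoc]

lemma sgen_inv (j : ℕ) : (s j)⁻¹ = s j := inv_eq_of_mul_eq_one_right (sq cs j)

lemma tau_cons (q : ℕ) : tau cs (q+1) = s 0 * run cs 1 q := by
  rw [tau_run]
  exact run_cons cs 0 q

lemma tau_succ (k : ℕ) : tau cs (k+1) = tau cs k * s k := by
  rw [tau_run, tau_run, run_succ]
  have : (0:ℕ) + k = k := by omega
  rw [this]

def tt (j : ℕ) : W := (tau cs (j+1))⁻¹ * (sgen cs 0 * tau cs (j+1))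

lemma tt_zero : tt cs 0 = s 0 := by
  unfold tt
  have h1 : tau cs 1 = s 0 := by
    rw [tau_succ]
    show 1 * s 0 = s 0
    rw [one_mul]
  rw [h1, sgen_inv, ← mul_assoc, sq, one_mul]

lemma tt_succ (j : ℕ) : tt cs (j+1) = s (j+1) * tt cs j * s (j+1) := by
  unfold tt
  rw [tau_succ cs (j+1), mul_inv_rev, sgen_inv]
  group

lemma tt_sq (j : ℕ) : tt cs j * tt cs j = 1 := by
  unfold tt
  simp only [mul_assoc]
  rw [mul_inv_cancel_left, sq' cs 0, inv_mul_cancel]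

lemma tt_sq' (j : ℕ) (x : W) : tt cs j * (tt cs j * x) = x := by
  rw [← mul_assoc, tt_sq, one_mul]

lemma comm_st : ∀ j, j < n → ∀ k, (k + 1 ≤ j ∨ j + 2 ≤ k) → s k * tt cs j = tt cs j * s k := by
  intro j
  induction j using Nat.strong_induction_on with
  | _ j ih =>
  cases j with
  | zero =>
    intro hj k hk
    rw [tt_zero]
    exact comm_both cs (by omega)
  | succ j =>
    intro hj k hk
    by_cases hkj : k = j
    · subst hkj
      cases k with
      | zero =>
        have h := B4 cs
        rw [tt_succ, tt_zero]
        simp only [mul_assoc] at h ⊢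
        exact h
      | succ k' =>
        have ha : s (k'+2) * tt cs k' = tt cs k' * s (k'+2) :=
          ih k' (by omega) (by omega) (k'+2) (by omega)
        have hbr : ∀ x : W, s (k'+1) * (s (k'+2) * (s (k'+1) * x))
            = s (k'+2) * (s (k'+1) * (s (k'+2) * x)) := by
          intro x
          rw [show k'+2 = k'+1+1 from rfl]
          exact braid' cs (by omega) (by omega) x
        have key : ∀ x : W, s (k'+1) * (s (k'+2) * (s (k'+1) * (tt cs k' * (s (k'+1) * (s (k'+2) * x)))))
            = s (k'+2) * (s (k'+1) * (tt cs k' * (s (k'+1) * (s (k'+2) * (s (k'+1) * x))))) := by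
          intro x
          rw [hbr, swapL ha, ← hbr]
        have h1 := key 1
        simp only [mul_one] at h1
        rw [tt_succ cs (k'+1), tt_succ cs k']
        simp only [mul_assoc]
        rw [show k'+1+1 = k'+2 from rfl]
        exact h1
    · have c1 : s k * s (j+1) = s (j+1) * s k := comm_both cs (by omega)
      have c2 : s k * tt cs j = tt cs j * s k := ih j (by omega) (by omega) k (by omega)
      rw [tt_succ]
      simp only [mul_assoc]
      rw [swapL c1, swapL c2, c1]


lemma adj : ∀ j, j + 2 ≤ n → tt cs j * tt cs (j+1) = tt cs (j+1) * tt cs j := by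
  intro j
  induction j with
  | zero =>
    intro h
    have hb := B4 cs
    rw [tt_succ, tt_zero]
    simp only [mul_assoc] at hb ⊢
    exact hb
  | succ j ih =>
    intro h
    have ha' : ∀ x : W, tt cs j * (tt cs j * x) = x := tt_sq' cs j
    have hbc : ∀ x : W, s (j+1) * (s (j+2) * (s (j+1) * x))
        = s (j+2) * (s (j+1) * (s (j+2) * x)) := by
      intro x
      rw [show j+2 = j+1+1 from rfl]
      exact braid' cs (by omega) (by omega) x
    have hacE : tt cs j * s (j+2) = s (j+2) * tt cs j :=
      (comm_st cs j (by omega) (j+2) (by omega)).symm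
    have hac : ∀ x : W, tt cs j * (s (j+2) * x) = s (j+2) * (tt cs j * x) := swapL hacE
    have hca : ∀ x : W, s (j+2) * (tt cs j * x) = tt cs j * (s (j+2) * x) := swapL hacE.symm
    have hIH : ∀ x : W, tt cs j * (s (j+1) * (tt cs j * (s (j+1) * x)))
        = s (j+1) * (tt cs j * (s (j+1) * (tt cs j * x))) := by
      intro x
      have e0 := ih (by omega)
      rw [tt_succ] at e0
      calc tt cs j * (s (j+1) * (tt cs j * (s (j+1) * x)))
          = (tt cs j * (s (j+1) * tt cs j * s (j+1))) * x := by simp only [mul_assoc]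
        _ = ((s (j+1) * tt cs j * s (j+1)) * tt cs j) * x := by rw [e0]
        _ = s (j+1) * (tt cs j * (s (j+1) * (tt cs j * x))) := by simp only [mul_assoc]
    have key : ∀ x : W,
        s (j+1) * (tt cs j * (s (j+1) * (s (j+2) * (s (j+1) * (tt cs j * (s (j+1) * (s (j+2) * x)))))))
        = s (j+2) * (s (j+1) * (tt cs j * (s (j+1) * (s (j+2) * (s (j+1) * (tt cs j * (s (j+1) * x))))))) := by
      intro x
      rw [hbc, hac]
      nth_rewrite 2 [hca]
      rw [← hbc, hIH, hac, hbc, hca, ← hbc]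
    have h1 := key 1
    simp only [mul_one] at h1
    rw [tt_succ cs (j+1), tt_succ cs j]
    simp only [mul_assoc]
    rw [show j+1+1 = j+2 from rfl]
    exact h1

lemma t_comm_le : ∀ j, j < n → ∀ i, i ≤ j → tt cs i * tt cs j = tt cs j * tt cs i := by
  intro j
  induction j with
  | zero =>
    intro hj i hi
    have : i = 0 := by omega
    rw [this]
  | succ j ih =>
    intro hj i hi
    by_cases h1 : i = j + 1
    · rw [h1]
    by_cases h2 : i = j
    · rw [h2]; exact adj cs j (by omega)
    · have c1 : s (j+1) * tt cs i = tt cs i * s (j+1) :=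
        comm_st cs i (by omega) (j+1) (by omega)
      have c2 : tt cs i * tt cs j = tt cs j * tt cs i := ih (by omega) i (by omega)
      rw [tt_succ]
      simp only [mul_assoc]
      rw [swapL c1.symm, swapL c2, c1.symm]

lemma t_comm {i j : ℕ} (hi : i < n) (hj : j < n) :
    tt cs i * tt cs j = tt cs j * tt cs i := by
  rcases le_total i j with h | h
  · exact t_comm_le cs j hj i h
  · exact (t_comm_le cs i hi j h).symm

def U : ℕ → W
  | 0 => 1
  | (p+1) => U p * tt cs p

lemma t_comm_U : ∀ p, p ≤ n → ∀ j, j < n → tt cs j * U cs p = U cs p * tt cs j := by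
  intro p
  induction p with
  | zero => intro _ j _; show tt cs j * 1 = 1 * tt cs j; rw [mul_one, one_mul]
  | succ p ih =>
    intro hp j hjn
    show tt cs j * (U cs p * tt cs p) = (U cs p * tt cs p) * tt cs j
    rw [← mul_assoc, ih (by omega) j hjn, mul_assoc, mul_assoc,
      t_comm cs hjn (by omega : p < n)]

lemma U_sq : ∀ p, p ≤ n → U cs p * U cs p = 1 := by
  intro p
  induction p with
  | zero => simp [U]
  | succ p ih =>
    intro hp
    show (U cs p * tt cs p) * (U cs p * tt cs p) = 1
    rw [mul_assoc, ← mul_assoc (tt cs p), t_comm_U cs p (by omega) p (by omega),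
      mul_assoc, tt_sq, mul_one]
    exact ih (by omega)

lemma s0_U {p : ℕ} (hp : p ≤ n) : s 0 * U cs p = U cs p * s 0 := by
  cases p with
  | zero => show s 0 * 1 = 1 * s 0; rw [mul_one, one_mul]
  | succ p => rw [← tt_zero]; exact t_comm_U cs (p+1) hp 0 (by omega)

lemma s0_U' {p : ℕ} (hp : p ≤ n) (x : W) : s 0 * (U cs p * (s 0 * x)) = U cs p * x := by
  rw [swapL (s0_U cs hp), sq' cs 0]


lemma conj2 (q : ℕ) : tau cs (q+1) * tt cs q = s 0 * tau cs (q+1) := by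
  unfold tt
  group

lemma tau_shift {q k : ℕ} (hq : q ≤ n) (hk1 : 1 ≤ k) (hk2 : k + 2 ≤ q) :
    tau cs q * s k = s (k+1) * tau cs q := by
  obtain ⟨q', rfl⟩ : ∃ q', q = q' + 1 := ⟨q - 1, by omega⟩
  obtain ⟨k', rfl⟩ : ∃ k', k = k' + 1 := ⟨k - 1, by omega⟩
  rw [tau_cons, mul_assoc, sigma_shift cs (by omega) (by omega), ← mul_assoc,
    comm_both cs (Or.inl (by omega : (0:ℕ) + 2 ≤ k' + 2)), mul_assoc]

lemma conj1 : ∀ j q, q ≤ n → j + 2 ≤ q → tau cs q * tt cs j = tt cs (j+1) * tau cs q := by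
  intro j
  induction j with
  | zero =>
    intro q hq hjq
    obtain ⟨q', rfl⟩ : ∃ q', q = q' + 2 := ⟨q - 2, by omega⟩
    have hR : s 0 * run cs 2 q' = run cs 2 q' * s 0 := comm_run cs (by omega)
    rw [tt_succ, tt_zero, tau_cons, run_cons]
    show s 0 * (s (1+1-1) * run cs 2 q') * s 0 = s 1 * s 0 * s 1 * (s 0 * (s 1 * run cs 2 q'))
    simp only [mul_assoc]
    rw [show (1+1-1 : ℕ) = 1 from rfl]
    rw [← hR, ← B4' cs (s 1 * run cs 2 q'), sq' cs 1]
  | succ j ih =>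
    intro q hq hjq
    have hsh : tau cs q * s (j+1) = s (j+2) * tau cs q :=
      tau_shift cs hq (by omega) (by omega)
    have hIH := ih q hq (by omega)
    have hexp : tt cs (j+2) = s (j+2) * tt cs (j+1) * s (j+2) := tt_succ cs (j+1)
    conv_lhs => rw [tt_succ cs j]
    rw [hexp]
    simp only [mul_assoc]
    rw [swapL hsh, swapL hIH, hsh]


lemma tau_U : ∀ p q, q ≤ n → p < q → tau cs q * U cs p = s 0 * (U cs (p+1) * tau cs q) := by
  intro p
  induction p with
  | zero =>
    intro q hq hp
    show tau cs q * 1 = s 0 * ((1 * tt cs 0) * tau cs q)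
    rw [mul_one, one_mul, tt_zero, ← mul_assoc, sq, one_mul]
  | succ p ih =>
    intro q hq hp
    have hc1 : tau cs q * tt cs p = tt cs (p+1) * tau cs q := conj1 cs p q hq (by omega)
    show tau cs q * (U cs p * tt cs p) = s 0 * ((U cs (p+1) * tt cs (p+1)) * tau cs q)
    rw [← mul_assoc, ih q hq (by omega)]
    simp only [mul_assoc]
    rw [hc1]

lemma tau_Uq : ∀ q, q ≤ n → tau cs q * U cs q = U cs q * tau cs q := by
  intro q hq
  cases q with
  | zero => show tau cs 0 * 1 = 1 * tau cs 0; rw [mul_one, one_mul]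
  | succ q' =>
    show tau cs (q'+1) * (U cs q' * tt cs q') = U cs (q'+1) * tau cs (q'+1)
    rw [← mul_assoc, tau_U cs q' (q'+1) hq (by omega)]
    simp only [mul_assoc]
    rw [conj2 cs q']
    exact s0_U' cs hq _

lemma tau_pow_U {q : ℕ} (hq : q ≤ n) : ∀ r, (tau cs q)^r * U cs q = U cs q * (tau cs q)^r := by
  intro r
  induction r with
  | zero => rw [pow_zero, one_mul, mul_one]
  | succ r ih => rw [pow_succ, mul_assoc, tau_Uq cs q hq, ← mul_assoc, ih, mul_assoc]

lemma S1 : ∀ q, q ≤ n → ∀ m, m ≤ q → (tau cs q)^m = U cs m * (run cs 1 (q-1))^m := by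
  intro q hq m
  induction m with
  | zero =>
    intro _
    rw [pow_zero, pow_zero, mul_one]
    rfl
  | succ m ih =>
    intro hm
    obtain ⟨q', rfl⟩ : ∃ q', q = q' + 1 := ⟨q - 1, by omega⟩
    rw [show (q'+1-1 : ℕ) = q' from rfl]
    rw [pow_succ', ih (by omega)]
    rw [show (q'+1-1 : ℕ) = q' from rfl]
    rw [← mul_assoc, tau_U cs m (q'+1) hq (by omega)]
    simp only [mul_assoc]
    rw [tau_cons]
    simp only [mul_assoc]
    rw [s0_U' cs (le_trans (by omega : m + 1 ≤ q'+1) hq), ← pow_succ']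

lemma tauU {k : ℕ} (hk : k ≤ n) : (tau cs k)^k = U cs k := by
  rw [S1 cs k hk k le_rfl, sigma_pow cs hk, mul_one]

lemma U_inv {p : ℕ} (hp : p ≤ n) : (U cs p)⁻¹ = U cs p :=
  inv_eq_of_mul_eq_one_right (U_sq cs p hp)

lemma K1 {q : ℕ} (hq : q ≤ n) :
    ∀ r p, p + r ≤ q → (tau cs q)^r * U cs p = U cs r * (U cs (p+r) * (tau cs q)^r) := by
  intro r
  induction r with
  | zero =>
    intro p hp
    rw [pow_zero, one_mul, mul_one]
    show U cs p = U cs 0 * U cs (p+0)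
    rw [show p+0 = p from rfl]
    show U cs p = 1 * U cs p
    rw [one_mul]
  | succ r ih =>
    intro p hp
    rw [pow_succ', mul_assoc, ih p (by omega)]
    rw [← mul_assoc, tau_U cs r q hq (by omega)]
    simp only [mul_assoc]
    rw [← mul_assoc (tau cs q), tau_U cs (p+r) q hq (by omega)]
    simp only [mul_assoc]
    rw [s0_U' cs (le_trans (by omega : r+1 ≤ q) hq), ← pow_succ']
    rw [show p+(r+1) = p+r+1 from by omega]

lemma K2 {q : ℕ} (hq : q ≤ n) :
    ∀ r, r ≤ q → ∀ p, p ≤ q → q ≤ p + r →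
      (tau cs q)^r * U cs p = U cs (p+r-q) * (U cs r * (U cs q * (tau cs q)^r)) := by
  intro r
  induction r with
  | zero =>
    intro _ p hp hqp
    have hpq : p = q := by omega
    subst hpq
    rw [pow_zero, one_mul, mul_one, show p+0-p = 0 from by omega]
    show U cs p = 1 * (1 * U cs p)
    rw [one_mul, one_mul]
  | succ r ih =>
    intro hr p hp hqp
    by_cases hc : q ≤ p + r
    · rw [pow_succ', mul_assoc, ih (by omega) p hp hc]
      rw [← mul_assoc, tau_U cs (p+r-q) q hq (by omega)]
      simp only [mul_assoc]
      rw [← mul_assoc (tau cs q), tau_U cs r q hq (by omega)]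
      simp only [mul_assoc]
      rw [s0_U' cs (by omega : p+r-q+1 ≤ n)]
      rw [← mul_assoc (tau cs q), tau_Uq cs q hq]
      simp only [mul_assoc]
      rw [← pow_succ']
      rw [show p+(r+1)-q = p+r-q+1 from by omega]
    · have hk := K1 cs hq (r+1) p (by omega)
      rw [hk, show p+(r+1)-q = 0 from by omega, show p+(r+1) = q from by omega]
      show U cs (r+1) * (U cs q * (tau cs q)^(r+1)) = 1 * (U cs (r+1) * (U cs q * (tau cs q)^(r+1)))
      rw [one_mul]

end ExchAux

/-- The exchange laws for `τ_q^{r_q} · τ_p^{-p}` with `0 < r_q < q`. -/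
theorem exchange_laws_neg_full (cs : CoxeterSystem (BCoxeterMatrix n) W)
    (p q : ℕ) (hp : 1 ≤ p) (hpq : p < q) (hq : q ≤ n)
    (rq : ℕ) (hrq : 0 < rq ∧ rq < q) :
    (p + rq ≤ q →
      tau cs q ^ (rq : ℤ) * tau cs p ^ (-(p : ℤ)) =
        tau cs rq ^ (-(rq : ℤ)) * tau cs (p + rq) ^ (-((p : ℤ) + rq)) *
          tau cs q ^ (rq : ℤ)) ∧
    (q < p + rq →
      tau cs q ^ (rq : ℤ) * tau cs p ^ (-(p : ℤ)) =
        tau cs (p + rq - q) ^ (-(p : ℤ) - rq + q) * tau cs rq ^ (-(rq : ℤ)) *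
          tau cs q ^ ((rq : ℤ) - q)) := by
  obtain ⟨hrq0, hrq1⟩ := hrq
  have hUp : tau cs p ^ (-(p : ℤ)) = ExchAux.U cs p := by
    rw [zpow_neg, zpow_natCast, ExchAux.tauU cs (by omega), ExchAux.U_inv cs (by omega)]
  have hUrq : tau cs rq ^ (-(rq : ℤ)) = ExchAux.U cs rq := by
    rw [zpow_neg, zpow_natCast, ExchAux.tauU cs (by omega), ExchAux.U_inv cs (by omega)]
  constructor
  · intro hle
    have hUprq : tau cs (p + rq) ^ (-((p : ℤ) + rq)) = ExchAux.U cs (p + rq) := by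
      rw [show -((p:ℤ)+(rq:ℤ)) = -(((p+rq : ℕ) : ℤ)) from by push_cast; ring,
        zpow_neg, zpow_natCast, ExchAux.tauU cs (by omega), ExchAux.U_inv cs (by omega)]
    rw [hUp, hUrq, hUprq, zpow_natCast]
    rw [ExchAux.K1 cs hq rq p (by omega)]
    simp only [mul_assoc]
  · intro hgt
    have hUd : tau cs (p + rq - q) ^ (-(p:ℤ) - rq + q) = ExchAux.U cs (p + rq - q) := by
      rw [show (-(p:ℤ) - rq + q) = -(((p + rq - q : ℕ) : ℤ)) from by omega,
        zpow_neg, zpow_natCast, ExchAux.tauU cs (by omega), ExchAux.U_inv cs (by omega)]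
    have hTq : tau cs q ^ ((rq:ℤ) - q) = (tau cs q)^rq * ExchAux.U cs q := by
      rw [zpow_sub, zpow_natCast, zpow_natCast, ExchAux.tauU cs hq, ExchAux.U_inv cs hq]
    rw [hUp, hUrq, hUd, hTq, zpow_natCast]
    rw [ExchAux.K2 cs hq rq (by omega) p (by omega) (by omega)]
    rw [← ExchAux.tau_pow_U cs hq rq]
    simp only [mul_assoc]
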